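/- Let M ⊆ ℝ^m with the induced topology, let N be a metric space and let π : M → N be a continuous, closed and surjective map. Then every element of C(M,ℝ) is integral over C(N,ℝ) via φ_π if and only if there exists a finite cover M = M₁ ∪ ⋯ ∪ M_k by closed subsets of M such that each restriction π|_{M_i} is injective. -/

import Mathlib

open Polynomial

namespace IntCoverAux

noncomputable section

variable {d : ℕ}

/-- The monic polynomial `X^d + ∑ a i X^i`. -/
def pa {d : ℕ} (a : Fin d → ℂ) : ℂ[X] :=
  X ^ d + ∑ i : Fin d, C (a i) * X ^ (i : ℕ)

lemma degree_sum_lt (a : Fin d → ℂ) :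
    (∑ i : Fin d, C (a i) * X ^ (i : ℕ) : ℂ[X]).degree < (d : ℕ) := by
  apply lt_of_le_of_lt (Polynomial.degree_sum_le _ _)
  rw [Finset.sup_lt_iff (by exact_mod_cast WithBot.bot_lt_coe d)]
  intro i _
  exact lt_of_le_of_lt (degree_C_mul_X_pow_le _ _) (by exact_mod_cast i.isLt)

lemma pa_monic (a : Fin d → ℂ) : (pa a).Monic := monic_X_pow_add (degree_sum_lt a)

lemma pa_natDegree (a : Fin d → ℂ) : (pa a).natDegree = d := by
  have hdeg : (pa a).degree = (d : ℕ) := by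
    rw [pa, degree_add_eq_left_of_degree_lt (by simpa [degree_X_pow] using degree_sum_lt a)]
    exact degree_X_pow d
  exact natDegree_eq_of_degree_eq_some hdeg

lemma pa_eval (a : Fin d → ℂ) (z : ℂ) :
    (pa a).eval z = z ^ d + ∑ i : Fin d, a i * z ^ (i : ℕ) := by
  simp [pa, eval_finset_sum]

lemma pa_roots_card (a : Fin d → ℂ) : Multiset.card (pa a).roots = d := by
  have h := (IsAlgClosed.splits (pa a)).natDegree_eq_card_roots
  rw [pa_natDegree] at h
  exact h.symm

lemma pa_root_norm_le {a : Fin d → ℂ} {z : ℂ} (hz : (pa a).eval z = 0) :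
    ‖z‖ ≤ max 1 (∑ i : Fin d, ‖a i‖) := by
  by_contra hlt
  push_neg at hlt
  have h1 : (1 : ℝ) < ‖z‖ := lt_of_le_of_lt (le_max_left _ _) hlt
  have hs : (∑ i : Fin d, ‖a i‖) < ‖z‖ := lt_of_le_of_lt (le_max_right _ _) hlt
  rcases Nat.eq_zero_or_pos d with hd | hd
  · subst hd; simp [pa_eval] at hz
  have hd1 : d - 1 + 1 = d := Nat.succ_pred_eq_of_pos hd
  have hzpow : z ^ d = -∑ i : Fin d, a i * z ^ (i : ℕ) := by
    have h := pa_eval a z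
    rw [hz] at h
    linear_combination -h
  have hb : ‖z‖ ^ d ≤ (∑ i : Fin d, ‖a i‖) * ‖z‖ ^ (d - 1) := by
    calc ‖z‖ ^ d = ‖z ^ d‖ := (norm_pow _ _).symm
      _ = ‖∑ i : Fin d, a i * z ^ (i : ℕ)‖ := by rw [hzpow, norm_neg]
      _ ≤ ∑ i : Fin d, ‖a i * z ^ (i : ℕ)‖ := norm_sum_le _ _
      _ ≤ ∑ i : Fin d, ‖a i‖ * ‖z‖ ^ (d - 1) := by
          apply Finset.sum_le_sum
          intro i _
          rw [norm_mul, norm_pow]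
          exact mul_le_mul_of_nonneg_left
            (pow_le_pow_right₀ h1.le (by omega)) (norm_nonneg _)
      _ = (∑ i : Fin d, ‖a i‖) * ‖z‖ ^ (d - 1) := by rw [Finset.sum_mul]
  have hcon : ‖z‖ ^ d < ‖z‖ ^ d :=
    calc ‖z‖ ^ d ≤ (∑ i : Fin d, ‖a i‖) * ‖z‖ ^ (d - 1) := hb
      _ < ‖z‖ * ‖z‖ ^ (d - 1) :=
          mul_lt_mul_of_pos_right hs (pow_pos (lt_trans one_pos h1) _)
      _ = ‖z‖ ^ d := by rw [← pow_succ']; rw [hd1]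
  exact lt_irrefl _ hcon

lemma exists_sorted_enum (s : Multiset ℂ) (hs : Multiset.card s = d) :
    ∃ ρ : Fin d → ℂ, s = ((List.ofFn ρ : List ℂ) : Multiset ℂ) ∧
      Monotone fun i => (ρ i).re := by
  classical
  set L := s.toList.mergeSort (fun x y => decide (x.re ≤ y.re)) with hLdef
  have hperm : L.Perm s.toList := List.mergeSort_perm _ _
  have hsorted : List.Pairwise (fun x y : ℂ => x.re ≤ y.re) L := by
    have h := List.pairwise_mergeSort (le := fun x y : ℂ => decide (x.re ≤ y.re))
      (fun a b c h1 h2 => by simp only [decide_eq_true_eq] at *; linarith)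
      (fun a b => by simpa using le_total a.re b.re) s.toList
    rw [← hLdef] at h
    simpa using h
  have hlen : L.length = d := by rw [hperm.length_eq, Multiset.length_toList, hs]
  refine ⟨fun i => L.get (Fin.cast hlen.symm i), ?_, ?_⟩
  · have hof : List.ofFn (fun i : Fin d => L.get (Fin.cast hlen.symm i)) = L := by
      apply List.ext_getElem
      · simp [hlen]
      · intro n h1 h2
        rw [List.getElem_ofFn]
        rfl
    rw [hof]
    rw [← Multiset.coe_toList s]
    exact (Multiset.coe_eq_coe.mpr hperm).symm
  · intro i j hij
    rcases eq_or_lt_of_le hij with rfl | h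
    · exact le_refl _
    · refine hsorted.rel_get_of_lt ?_
      rw [Fin.lt_def] at h ⊢
      exact h

/-- The closed condition: the `(r+1)`-st smallest real part among the roots of `pa a`
equals `t`, expressed by counting. -/
def S (d r : ℕ) : Set ((Fin d → ℂ) × ℝ) :=
  {q | r + 1 ≤ (pa q.1).roots.countP (fun z => z.re ≤ q.2) ∧
       d - r ≤ (pa q.1).roots.countP (fun z => q.2 ≤ z.re)}

lemma countP_coe_ofFn (p : ℂ → Prop) [DecidablePred p] (ρ : Fin d → ℂ) :
    Multiset.countP p ((List.ofFn ρ : List ℂ) : Multiset ℂ)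
      = (Finset.univ.filter fun i => p (ρ i)).card := by
  rw [← Fin.univ_val_map, Multiset.countP_map]
  rfl

lemma pa_eq_prod {a ρ : Fin d → ℂ}
    (h : (pa a).roots = ((List.ofFn ρ : List ℂ) : Multiset ℂ)) :
    pa a = ∏ i : Fin d, (X - C (ρ i)) := by
  have he := (IsAlgClosed.splits (pa a)).eq_prod_roots_of_monic (pa_monic a)
  rw [h] at he
  rw [he, Multiset.map_coe, Multiset.prod_coe, List.map_ofFn, List.prod_ofFn]
  rfl

lemma roots_prod_ofFn (ρ : Fin d → ℂ) :
    (∏ i : Fin d, (X - C (ρ i)) : ℂ[X]).roots = ((List.ofFn ρ : List ℂ) : Multiset ℂ) := by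
  have h : (∏ i : Fin d, (X - C (ρ i)) : ℂ[X])
      = (Multiset.map (fun z : ℂ => X - C z) ((List.ofFn ρ : List ℂ) : Multiset ℂ)).prod := by
    rw [Multiset.map_coe, Multiset.prod_coe, List.map_ofFn, List.prod_ofFn]
    rfl
  rw [h, roots_multiset_prod_X_sub_C]

lemma rth_eq_of_mem {a : Fin d → ℂ} {t : ℝ} {r : ℕ} (hr : r < d) {ρ : Fin d → ℂ}
    (hroots : (pa a).roots = ((List.ofFn ρ : List ℂ) : Multiset ℂ))
    (hmono : Monotone fun i => (ρ i).re) (h : (a, t) ∈ S d r) :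
    (ρ ⟨r, hr⟩).re = t := by
  simp only [S, Set.mem_setOf_eq] at h
  obtain ⟨h1, h2⟩ := h
  rw [hroots, countP_coe_ofFn] at h1 h2
  by_contra hne
  rcases lt_or_gt_of_ne hne with hlt | hgt
  · -- (ρ r).re < t : the upper count is too small
    have hsub : (Finset.univ.filter fun i => t ≤ (ρ i).re) ⊆ Finset.Ioi (⟨r, hr⟩ : Fin d) := by
      intro i hi
      rw [Finset.mem_filter] at hi
      rw [Finset.mem_Ioi]
      by_contra hle
      push_neg at hle
      exact absurd (le_trans hi.2 (hmono hle)) (not_le.mpr hlt)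
    have hcard := Finset.card_le_card hsub
    rw [Fin.card_Ioi] at hcard
    simp only [Fin.val_mk] at hcard
    omega
  · have hsub : (Finset.univ.filter fun i => (ρ i).re ≤ t) ⊆ Finset.Iio (⟨r, hr⟩ : Fin d) := by
      intro i hi
      rw [Finset.mem_filter] at hi
      rw [Finset.mem_Iio]
      by_contra hle
      push_neg at hle
      exact absurd (le_trans (hmono hle) hi.2) (not_le.mpr hgt)
    have hcard := Finset.card_le_card hsub
    rw [Fin.card_Iio] at hcard
    simp only [Fin.val_mk] at hcard
    omega

lemma mem_S_of_rth {a : Fin d → ℂ} {t : ℝ} {r : ℕ} (hr : r < d) {ρ : Fin d → ℂ}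
    (hroots : (pa a).roots = ((List.ofFn ρ : List ℂ) : Multiset ℂ))
    (hmono : Monotone fun i => (ρ i).re) (ht : (ρ ⟨r, hr⟩).re = t) : (a, t) ∈ S d r := by
  simp only [S, Set.mem_setOf_eq]
  constructor
  · show r + 1 ≤ _
    rw [hroots, countP_coe_ofFn]
    have hsub : Finset.Iic (⟨r, hr⟩ : Fin d) ⊆ Finset.univ.filter fun i => (ρ i).re ≤ t := by
      intro i hi
      rw [Finset.mem_Iic] at hi
      rw [Finset.mem_filter]
      exact ⟨Finset.mem_univ _, ht ▸ hmono hi⟩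
    have hc := Finset.card_le_card hsub
    rw [Fin.card_Iic] at hc
    simp only [Fin.val_mk] at hc
    exact hc
  · show d - r ≤ _
    rw [hroots, countP_coe_ofFn]
    have hsub : Finset.Ici (⟨r, hr⟩ : Fin d) ⊆ Finset.univ.filter fun i => t ≤ (ρ i).re := by
      intro i hi
      rw [Finset.mem_Ici] at hi
      rw [Finset.mem_filter]
      exact ⟨Finset.mem_univ _, ht ▸ hmono hi⟩
    have hc := Finset.card_le_card hsub
    rw [Fin.card_Ici] at hc
    simp only [Fin.val_mk] at hc
    exact hc

lemma exists_mem_S_of_root {a : Fin d → ℂ} {t : ℝ} (h : (pa a).eval ((t : ℝ) : ℂ) = 0) :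
    ∃ r : ℕ, r < d ∧ (a, t) ∈ S d r := by
  have hmem : ((t : ℝ) : ℂ) ∈ (pa a).roots := by
    rw [mem_roots (pa_monic a).ne_zero]
    exact h
  set R := (pa a).roots with hR
  have hcardR : Multiset.card R = d := pa_roots_card a
  simp only [S, Set.mem_setOf_eq]
  refine ⟨R.countP (fun z => z.re < t), ?_, ?_, ?_⟩
  · have hpart := Multiset.card_eq_countP_add_countP (fun z => z.re < t) R
    have hpos : 0 < R.countP (fun z => ¬ z.re < t) :=
      Multiset.countP_pos.mpr ⟨_, hmem, by simp⟩
    omega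
  · show _ + 1 ≤ R.countP (fun z => z.re ≤ t)
    have hsplit := Multiset.countP_eq_countP_filter_add R
      (fun z => z.re ≤ t) (fun z => z.re < t)
    have h1 : (R.filter (fun z => z.re < t)).countP (fun z => z.re ≤ t)
        = R.countP (fun z => z.re < t) := by
      rw [Multiset.countP_filter]
      apply Multiset.countP_congr rfl
      intro z _
      simp only [eq_iff_iff]
      constructor
      · exact fun hz => hz.2
      · exact fun hz => ⟨le_of_lt hz, hz⟩
    have h2 : 0 < (R.filter (fun z => ¬ z.re < t)).countP (fun z => z.re ≤ t) := by
      apply Multiset.countP_pos.mpr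
      refine ⟨((t : ℝ) : ℂ), Multiset.mem_filter.mpr ⟨hmem, by simp⟩, by simp⟩
    omega
  · show d - _ ≤ R.countP (fun z => t ≤ z.re)
    have hpart := Multiset.card_eq_countP_add_countP (fun z => z.re < t) R
    have heq : R.countP (fun z => t ≤ z.re) = R.countP (fun z => ¬ z.re < t) := by
      apply Multiset.countP_congr rfl
      intro z _
      simp [not_lt]
    omega

lemma eq_of_mem_S {a : Fin d → ℂ} {t t' : ℝ} {r : ℕ}
    (h : (a, t) ∈ S d r) (h' : (a, t') ∈ S d r) : t = t' := by
  have key : ∀ {s u : ℝ}, s < u → (a, s) ∈ S d r → (a, u) ∈ S d r → False := by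
    intro s u hsu hs hu
    simp only [S, Set.mem_setOf_eq] at hs hu
    have h1 := hs.1
    have h2 := hu.2
    have hcardR : Multiset.card (pa a).roots = d := pa_roots_card a
    have hmono : (pa a).roots.countP (fun z => u ≤ z.re)
        ≤ (pa a).roots.countP (fun z => ¬ z.re ≤ s) := by
      rw [Multiset.countP_eq_card_filter, Multiset.countP_eq_card_filter]
      apply Multiset.card_le_card
      apply Multiset.monotone_filter_right
      intro z hz
      simp only [not_le]
      linarith
    have hpart := Multiset.card_eq_countP_add_countP (fun z => z.re ≤ s) (pa a).roots
    omega
  rcases lt_trichotomy t t' with h1 | h1 | h1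
  · exact (key h1 h h').elim
  · exact h1
  · exact (key h1 h' h).elim

open Filter Topology in
lemma isClosed_S (d r : ℕ) : IsClosed (S d r) := by
  apply IsSeqClosed.isClosed
  intro u x hu hux
  have h1 : Tendsto (fun n => (u n).1) atTop (𝓝 x.1) := (continuous_fst.tendsto x).comp hux
  have h2 : Tendsto (fun n => (u n).2) atTop (𝓝 x.2) := (continuous_snd.tendsto x).comp hux
  rcases le_or_gt d r with hdr | hr
  · exfalso
    have hc := (hu 0).1
    have hle := Multiset.countP_le_card (fun z : ℂ => z.re ≤ (u 0).2) (pa (u 0).1).roots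
    rw [pa_roots_card] at hle
    omega
  -- sorted enumerations of the roots
  have hen : ∀ n, ∃ ρ : Fin d → ℂ,
      (pa (u n).1).roots = ((List.ofFn ρ : List ℂ) : Multiset ℂ) ∧
      Monotone fun i => (ρ i).re :=
    fun n => exists_sorted_enum _ (pa_roots_card _)
  choose ρ hρroots hρmono using hen
  -- a uniform bound on the roots
  have hcont : Continuous fun a : Fin d → ℂ => max 1 (∑ i : Fin d, ‖a i‖) := by
    apply continuous_const.max
    apply continuous_finset_sum
    intro i _
    exact (continuous_apply i).norm
  have hbdd : BddAbove (Set.range fun n => max 1 (∑ i : Fin d, ‖(u n).1 i‖)) :=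
    ((hcont.tendsto x.1).comp h1).bddAbove_range
  obtain ⟨B, hB⟩ := hbdd
  have hBn : ∀ n, max 1 (∑ i : Fin d, ‖(u n).1 i‖) ≤ B := fun n =>
    hB (Set.mem_range_self n)
  have hρmem : ∀ n i, ρ n i ∈ (pa (u n).1).roots := by
    intro n i
    rw [hρroots n]
    exact Multiset.mem_coe.mpr (List.mem_ofFn.mpr ⟨i, rfl⟩)
  have hρbd : ∀ n, ρ n ∈ Set.pi Set.univ fun _ : Fin d => Metric.closedBall (0 : ℂ) B := by
    intro n
    intro i _
    rw [Metric.mem_closedBall, dist_zero_right]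
    have hev : (pa (u n).1).eval (ρ n i) = 0 :=
      (mem_roots (pa_monic _).ne_zero).mp (hρmem n i)
    exact le_trans (pa_root_norm_le hev) (hBn n)
  have hK : IsCompact (Set.pi Set.univ fun _ : Fin d => Metric.closedBall (0 : ℂ) B) :=
    isCompact_univ_pi fun _ => isCompact_closedBall _ _
  obtain ⟨ρl, -, φ, hφ, hconv⟩ := hK.tendsto_subseq hρbd
  have hpt : ∀ i, Tendsto (fun n => ρ (φ n) i) atTop (𝓝 (ρl i)) :=
    fun i => ((continuous_apply i).tendsto _).comp hconv
  have hxa : Tendsto (fun n => (u (φ n)).1) atTop (𝓝 x.1) := h1.comp hφ.tendsto_atTop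
  have hxt : Tendsto (fun n => (u (φ n)).2) atTop (𝓝 x.2) := h2.comp hφ.tendsto_atTop
  -- the limit polynomial is the product of the limit roots
  have hprod : pa x.1 = ∏ i : Fin d, (X - C (ρl i)) := by
    apply Polynomial.funext
    intro z
    have t1 : Tendsto (fun n => (pa ((u (φ n)).1)).eval z) atTop (𝓝 ((pa x.1).eval z)) := by
      have hc : Continuous fun a : Fin d → ℂ => (pa a).eval z := by
        simp only [pa_eval]
        apply continuous_const.add
        apply continuous_finset_sum
        intro i _
        exact (continuous_apply i).mul continuous_const
      exact (hc.tendsto x.1).comp hxa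
    have t2 : Tendsto (fun n => (pa ((u (φ n)).1)).eval z) atTop
        (𝓝 (∏ i : Fin d, (z - ρl i))) := by
      have heq : ∀ n, (pa ((u (φ n)).1)).eval z = ∏ i : Fin d, (z - ρ (φ n) i) := by
        intro n
        rw [pa_eq_prod (hρroots (φ n))]
        simp [eval_prod]
      rw [funext heq]
      exact tendsto_finset_prod _ fun i _ => tendsto_const_nhds.sub (hpt i)
    have := tendsto_nhds_unique t1 t2
    rw [this]
    simp [eval_prod]
  have hrootsl : (pa x.1).roots = ((List.ofFn ρl : List ℂ) : Multiset ℂ) := by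
    rw [hprod, roots_prod_ofFn]
  have hmonol : Monotone fun i => (ρl i).re := by
    intro i j hij
    have hi := (Complex.continuous_re.tendsto _).comp (hpt i)
    have hj := (Complex.continuous_re.tendsto _).comp (hpt j)
    exact le_of_tendsto_of_tendsto' hi hj fun n => hρmono (φ n) hij
  have hrth : (ρl ⟨r, hr⟩).re = x.2 := by
    have hn : ∀ n, (ρ (φ n) ⟨r, hr⟩).re = (u (φ n)).2 := fun n =>
      rth_eq_of_mem hr (hρroots _) (hρmono _) (hu _)
    have ha : Tendsto (fun n => (ρ (φ n) ⟨r, hr⟩).re) atTop (𝓝 ((ρl ⟨r, hr⟩).re)) :=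
      (Complex.continuous_re.tendsto _).comp (hpt _)
    have hb : Tendsto (fun n => (ρ (φ n) ⟨r, hr⟩).re) atTop (𝓝 x.2) := by
      rw [funext hn]
      exact hxt
    exact tendsto_nhds_unique ha hb
  exact mem_S_of_rth hr hrootsl hmonol hrth

end

end IntCoverAux

open ContinuousMap

/-- The ring homomorphism `φ_π : C(N, ℝ) →+* C(M, ℝ)`, `f ↦ f ∘ π`, induced by a
continuous map `π : M → N`. -/
noncomputable def phiPi {M N : Type*} [TopologicalSpace M] [TopologicalSpace N]
    (π : C(M, N)) : C(N, ℝ) →+* C(M, ℝ) :=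
  (ContinuousMap.compRightAlgHom ℝ ℝ π).toRingHom

lemma phiPi_apply {M N : Type*} [TopologicalSpace M] [TopologicalSpace N]
    (π : C(M, N)) (f : C(N, ℝ)) (x : M) : phiPi π f x = f (π x) := rfl

/-- Let `M ⊆ ℝ^m` with the induced topology, `N` a metric space and
`π : M → N` a continuous, closed and surjective map. Then every element of `C(M, ℝ)`
is integral over `C(N, ℝ)` via `φ_π` if and only if there is a finite cover of `M` by
closed subsets on each of which `π` is injective. -/
theorem integral_iff_closed_cover {m : ℕ} (M : Set (Fin m → ℝ)) {N : Type*}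
    [MetricSpace N] (π : C(M, N)) (hclosed : IsClosedMap π)
    (hsurj : Function.Surjective π) :
    (phiPi π).IsIntegral ↔
      ∃ k : ℕ, ∃ Mi : Fin k → Set M, (∀ i, IsClosed (Mi i)) ∧ (⋃ i, Mi i) = Set.univ ∧
        ∀ i, Set.InjOn π (Mi i) := by
  constructor
  · -- only if: from integrality construct the cover
    intro h
    classical
    set φ := phiPi π with hφ
    -- the coordinate functions
    let g : Fin m → C(↥M, ℝ) := fun j =>
      ⟨fun x => (x : Fin m → ℝ) j, (continuous_apply j).comp continuous_subtype_val⟩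
    have hint : ∀ j, ∃ p : Polynomial C(N, ℝ), p.Monic ∧ Polynomial.eval₂ φ (g j) p = 0 :=
      fun j => h (g j)
    choose p hpm hpz using hint
    let d : Fin m → ℕ := fun j => (p j).natDegree
    -- evaluation homomorphisms
    let χ : ↥M → (C(N, ℝ) →+* ℂ) := fun x =>
      ((Complex.ofRealHom.comp ((Pi.evalRingHom (fun _ : ↥M => ℝ) x).comp
        (ContinuousMap.coeFnRingHom : C(↥M, ℝ) →+* (↥M → ℝ)))).comp φ)
    have hχ : ∀ (x : ↥M) (f : C(N, ℝ)), χ x f = ((f (π x) : ℝ) : ℂ) := fun x f => rfl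
    -- coefficient tuples
    let A : ∀ j : Fin m, ↥M → (Fin (d j) → ℂ) := fun j x i => χ x ((p j).coeff i)
    -- the coordinate value is a root of the associated monic polynomial
    have hroot : ∀ (j : Fin m) (x : ↥M),
        (IntCoverAux.pa (A j x)).eval ((g j x : ℝ) : ℂ) = 0 := by
      intro j x
      have hmap : (p j).map (χ x) = IntCoverAux.pa (A j x) := by
        have hmm : ((p j).map (χ x)).Monic := (hpm j).map _
        have hnd : ((p j).map (χ x)).natDegree = d j := (hpm j).natDegree_map _
        rw [hmm.as_sum, hnd, IntCoverAux.pa]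
        congr 1
        rw [← Fin.sum_univ_eq_sum_range fun i => Polynomial.C (((p j).map (χ x)).coeff i)
          * Polynomial.X ^ i]
        apply Finset.sum_congr rfl
        intro i _
        rw [Polynomial.coeff_map]
      have h0 : Polynomial.eval₂ (χ x) ((g j x : ℝ) : ℂ) (p j) = 0 := by
        have hh := Polynomial.hom_eval₂ (p j) φ
          (Complex.ofRealHom.comp ((Pi.evalRingHom (fun _ : ↥M => ℝ) x).comp
            (ContinuousMap.coeFnRingHom : C(↥M, ℝ) →+* (↥M → ℝ)))) (g j)
        rw [hpz j] at hh
        simp only [map_zero] at hh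
        rw [← RingHom.comp_assoc] at hh
        exact hh.symm
      rw [← hmap, Polynomial.eval_map]
      exact h0
    -- the pieces of the cover
    let T : ∀ j : Fin m, Fin (d j) → Set ↥M := fun j r =>
      (fun x => (A j x, g j x)) ⁻¹' IntCoverAux.S (d j) (r : ℕ)
    have hTclosed : ∀ j r, IsClosed (T j r) := by
      intro j r
      apply IsClosed.preimage ?_ (IntCoverAux.isClosed_S (d j) (r : ℕ))
      apply Continuous.prodMk
      · apply continuous_pi
        intro i
        exact Complex.continuous_ofReal.comp
          ((((p j).coeff i).continuous).comp π.continuous)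
      · exact (g j).continuous
    have hcov : ∀ x : ↥M, ∃ v : (∀ j, Fin (d j)), ∀ j, x ∈ T j (v j) := by
      intro x
      have hj : ∀ j, ∃ r : Fin (d j), (A j x, g j x) ∈ IntCoverAux.S (d j) (r : ℕ) := by
        intro j
        obtain ⟨r, hrd, hmem⟩ := IntCoverAux.exists_mem_S_of_root (hroot j x)
        exact ⟨⟨r, hrd⟩, hmem⟩
      choose v hv using hj
      exact ⟨v, hv⟩
    have hA : ∀ (j : Fin m) (x x' : ↥M), π x = π x' → A j x = A j x' := by
      intro j x x' hxx
      funext i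
      show χ x ((p j).coeff i) = χ x' ((p j).coeff i)
      rw [hχ, hχ, hxx]
    have hthin : ∀ (j : Fin m) (r : Fin (d j)) (x x' : ↥M), π x = π x' →
        x ∈ T j r → x' ∈ T j r → g j x = g j x' := by
      intro j r x x' hxx hx hx'
      have hx1 : (A j x, g j x) ∈ IntCoverAux.S (d j) (r : ℕ) := hx
      have hx2 : (A j x, g j x') ∈ IntCoverAux.S (d j) (r : ℕ) := by
        have := hx'
        rwa [Set.mem_preimage, ← hA j x x' hxx] at this
      exact IntCoverAux.eq_of_mem_S hx1 hx2
    -- packaging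
    let ι := ∀ j : Fin m, Fin (d j)
    let e := Fintype.equivFin ι
    refine ⟨Fintype.card ι, fun i => ⋂ j, T j (e.symm i j), ?_, ?_, ?_⟩
    · intro i
      exact isClosed_iInter fun j => hTclosed j _
    · ext x
      simp only [Set.mem_iUnion, Set.mem_univ, iff_true]
      obtain ⟨v, hv⟩ := hcov x
      refine ⟨e v, ?_⟩
      apply Set.mem_iInter.mpr
      intro j
      rw [Equiv.symm_apply_apply]
      exact hv j
    · intro i x hx x' hx' hxx
      have hco : ∀ j, g j x = g j x' := fun j =>
        hthin j _ x x' hxx (Set.mem_iInter.mp hx j) (Set.mem_iInter.mp hx' j)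
      apply Subtype.ext
      funext j
      exact hco j
  · -- if: from the cover, integrality
    rintro ⟨k, Mi, hMc, hMu, hMinj⟩ g
    classical
    have hext : ∀ i : Fin k, ∃ H : C(N, ℝ), ∀ x : ↥M, x ∈ Mi i → H (π x) = g x := by
      intro i
      let ι0 : C(↥(Mi i), ↥M) := ⟨Subtype.val, continuous_subtype_val⟩
      let q : C(↥(Mi i), N) := π.comp ι0
      have hq : Topology.IsClosedEmbedding ⇑q := by
        apply Topology.IsClosedEmbedding.of_continuous_injective_isClosedMap q.continuous
        · intro z w hzw
          exact Subtype.ext (hMinj i z.2 w.2 hzw)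
        · have h1 : IsClosedMap (Subtype.val : ↥(Mi i) → ↥M) :=
            (hMc i).isClosedMap_subtype_val
          exact hclosed.comp h1
      obtain ⟨H, hH⟩ := (g.comp ι0).exists_extension' hq
      refine ⟨H, fun x hx => ?_⟩
      have hcf := congrFun hH ⟨x, hx⟩
      exact hcf
    choose H hH using hext
    refine ⟨∏ i : Fin k, (Polynomial.X - Polynomial.C (H i)),
      Polynomial.monic_prod_of_monic _ _ (fun i _ => Polynomial.monic_X_sub_C _), ?_⟩
    rw [Polynomial.eval₂_finset_prod]
    ext x
    rw [ContinuousMap.prod_apply]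
    have hx : x ∈ ⋃ i, Mi i := hMu ▸ Set.mem_univ x
    obtain ⟨i, hi⟩ := Set.mem_iUnion.mp hx
    rw [ContinuousMap.zero_apply]
    apply Finset.prod_eq_zero (Finset.mem_univ i)
    rw [Polynomial.eval₂_sub, Polynomial.eval₂_X, Polynomial.eval₂_C]
    rw [ContinuousMap.sub_apply, phiPi_apply]
    rw [hH i x hi]
    exact sub_self _
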